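/- arXiv:1312.7151 — 3 statements merged into one kernel-verified Lean document; each statement's English description precedes it below -/
import Mathlib

section
/- Let q_n = 2^{n!}, q'_n = 2^{(2n)!}, and (λ_n) positive integers with λ_n → ∞ and λ_n/n → 0. Then ξ := Σ_{n≥1} 2^{-(2n-1)!·λ_n} belongs to S_{q'} but not to S_q. -/
open Filter

/-- Distance from a real number to the nearest integer. -/
noncomputable def distNearestInt (x : ℝ) : ℝ := |x - round x|

/-- The Liouville set `S_{q,u}` attached to a sequence `q` of positive integers and a
sequence `u` of positive reals. -/
def LSet (q : ℕ → ℕ) (u : ℕ → ℝ) : Set ℝ :=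
  {ξ : ℝ | Irrational ξ ∧ ∃ κ₁ κ₂ : ℝ, 0 < κ₁ ∧ 0 < κ₂ ∧ ∃ b : ℕ → ℕ,
    ∀ᶠ n in Filter.atTop, 1 ≤ b n ∧ (b n : ℝ) ≤ (q n : ℝ) ^ κ₁ ∧
      distNearestInt ((b n : ℝ) * ξ) ≤ (q n : ℝ) ^ (-(κ₂ * u n))}

open Filter Finset

namespace LSAux

variable (l : ℕ → ℕ)

/-- exponent sequence -/
def A (n : ℕ) : ℕ := (2 * n + 1).factorial * l (n + 1)

/-- the summand -/
noncomputable def f (n : ℕ) : ℝ := ((2:ℝ) ^ A l n)⁻¹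

variable (hlpos : ∀ n, 0 < l n)

lemma fact_succ_succ (n : ℕ) : (2 * (n+1) + 1).factorial
    = (2*n+3) * ((2*n+2) * (2*n+1).factorial) := by
  rw [show 2*(n+1)+1 = (2*n+2)+1 by ring, Nat.factorial_succ,
    show 2*n+2 = (2*n+1)+1 by ring, Nat.factorial_succ]

include hlpos in
lemma le_A (n : ℕ) : n + 1 ≤ A l n := by
  unfold A
  calc n + 1 ≤ 2*n+1 := by omega
    _ ≤ (2*n+1).factorial := Nat.self_le_factorial _
    _ ≤ (2*n+1).factorial * l (n+1) := Nat.le_mul_of_pos_right _ (hlpos _)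

include hlpos in
omit hlpos in
lemma f_pos (n : ℕ) : 0 < f l n := by
  unfold f; positivity

include hlpos in
lemma f_le (n : ℕ) : f l n ≤ (1/2:ℝ) ^ n := by
  unfold f
  rw [one_div, inv_pow]
  apply inv_anti₀ (by positivity)
  exact pow_le_pow_right₀ one_le_two (le_trans (Nat.le_succ n) (le_A l hlpos n))

include hlpos in
lemma summable_f : Summable (f l) := by
  apply Summable.of_nonneg_of_le (fun n => (f_pos l n).le) (f_le l hlpos)
  exact summable_geometric_of_lt_one (by norm_num) (by norm_num)

variable {N : ℕ} (hN : ∀ m, N ≤ m → l m ≤ m)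

include hlpos hN in
lemma A_step {n : ℕ} (hn : N ≤ n + 1) : A l n + 1 ≤ A l (n + 1) := by
  have h1 : A l n ≤ (2*n+2) * (2*n+1).factorial := by
    unfold A
    have := hN (n+1) hn
    calc (2*n+1).factorial * l (n+1) ≤ (2*n+1).factorial * (2*n+2) :=
          Nat.mul_le_mul_left _ (by omega)
      _ = (2*n+2) * (2*n+1).factorial := Nat.mul_comm _ _
  have h2 : (2*n+3) * ((2*n+2) * (2*n+1).factorial) ≤ A l (n+1) := by
    unfold A
    rw [fact_succ_succ]
    exact Nat.le_mul_of_pos_right _ (hlpos _)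
  have h3 : 0 < (2*n+2) * (2*n+1).factorial := by positivity
  calc A l n + 1 ≤ (2*n+2)*(2*n+1).factorial + 1 := by omega
    _ ≤ (2*n+3) * ((2*n+2) * (2*n+1).factorial) := by nlinarith
    _ ≤ A l (n+1) := h2

include hlpos hN in
lemma A_add {k : ℕ} (hk : N ≤ k) (i : ℕ) : A l k + i ≤ A l (k + i) := by
  induction i with
  | zero => simp
  | succ i ih =>
      have := A_step l hlpos hN (n := k + i) (by omega)
      rw [show k + (i+1) = (k+i)+1 by ring]
      omega

include hlpos hN in
lemma tail_le {k : ℕ} (hk : N ≤ k) :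
    ∑' i, f l (i + k) ≤ 2 * ((2:ℝ) ^ A l k)⁻¹ := by
  have hsum : Summable (fun i => f l (i + k)) := (summable_f l hlpos).comp_injective
    (add_left_injective k)
  have hle : ∀ i, f l (i + k) ≤ ((2:ℝ) ^ A l k)⁻¹ * (1/2:ℝ)^i := by
    intro i
    unfold f
    rw [one_div, inv_pow, ← mul_inv, ← pow_add]
    apply inv_anti₀ (by positivity)
    apply pow_le_pow_right₀ one_le_two
    have := A_add l hlpos hN hk i
    rw [Nat.add_comm i k] at *
    omega
  calc ∑' i, f l (i + k) ≤ ∑' i, ((2:ℝ) ^ A l k)⁻¹ * (1/2:ℝ)^i := by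
        apply Summable.tsum_le_tsum hle hsum
        exact (summable_geometric_of_lt_one (by norm_num) (by norm_num)).mul_left _
    _ = ((2:ℝ) ^ A l k)⁻¹ * ∑' i, (1/2:ℝ)^i := tsum_mul_left
    _ = 2 * ((2:ℝ) ^ A l k)⁻¹ := by rw [tsum_geometric_two]; ring

include hlpos in
lemma tail_pos (k : ℕ) : ((2:ℝ) ^ A l k)⁻¹ ≤ ∑' i, f l (i + k) := by
  have hsum : Summable (fun i => f l (i + k)) := (summable_f l hlpos).comp_injective
    (add_left_injective k)
  have := Summable.le_tsum hsum 0 (fun i _ => (f_pos l _).le)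
  simpa [f] using this

end LSAux

namespace Part2

open LSAux

variable (l : ℕ → ℕ) (hlpos : ∀ n, 0 < l n)

/-- numerator of partial sum -/
def p (n : ℕ) : ℕ := ∑ k ∈ range (n+1), 2 ^ (A l n - A l k)

lemma p_cast {n : ℕ} (hmono : ∀ k ≤ n, A l k ≤ A l n) :
    (p l n : ℝ) = 2 ^ A l n * ∑ k ∈ range (n+1), f l k := by
  unfold p f
  push_cast
  rw [Finset.mul_sum]
  apply Finset.sum_congr rfl
  intro k hk
  rw [Finset.mem_range] at hk
  rw [pow_sub₀ (2:ℝ) two_ne_zero (hmono k (by omega))]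

lemma p_odd {n : ℕ} (hstrict : ∀ k < n, A l k < A l n) : p l n % 2 = 1 := by
  unfold p
  rw [Finset.sum_range_succ, Nat.sub_self, pow_zero]
  have h2 : 2 ∣ ∑ k ∈ range n, 2 ^ (A l n - A l k) := by
    apply Finset.dvd_sum
    intro k hk
    rw [Finset.mem_range] at hk
    exact dvd_pow_self 2 (by have := hstrict k hk; omega)
  obtain ⟨t, ht⟩ := h2
  omega

include hlpos in
lemma key_eq {n : ℕ} (hmono : ∀ k ≤ n, A l k ≤ A l n) :
    (2:ℝ) ^ A l n * (∑' m, f l m) = p l n + 2 ^ A l n * ∑' i, f l (i + (n+1)) := by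
  rw [← Summable.sum_add_tsum_nat_add (n+1) (summable_f l hlpos), p_cast l hmono, mul_add]

include hlpos in
/-- the master index: beyond it, `l m ≤ m` and `A` dominates all earlier values -/
lemma exists_master (hln : Filter.Tendsto (fun n => (l n : ℝ) / n) Filter.atTop (nhds 0)) :
    ∃ N : ℕ, (∀ m, N ≤ m → l m ≤ m) ∧ (∀ n k, N ≤ n → k < n → A l k < A l n) := by
  have h1 : ∀ᶠ m in atTop, (l m : ℝ) / m < 1 := (tendsto_order.1 hln).2 1 one_pos
  obtain ⟨N₀, hN₀⟩ := (h1.and (eventually_ge_atTop 1)).exists_forall_of_atTop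
  have hle : ∀ m, N₀ ≤ m → l m ≤ m := by
    intro m hm
    obtain ⟨h, h1'⟩ := hN₀ m hm
    have hmpos : (0:ℝ) < m := by exact_mod_cast h1'
    have := (div_lt_one hmpos).1 h
    exact_mod_cast this.le
  set C := (Finset.range (N₀+1)).sup (A l) with hC
  refine ⟨N₀ + C + 1, fun m hm => hle m (by omega), ?_⟩
  intro n k hn hk
  have hstep : ∀ i, A l N₀ + i ≤ A l (N₀ + i) := A_add l hlpos hle le_rfl
  by_cases hkN : N₀ ≤ k
  · have := A_add l hlpos hle hkN (n - k)
    rw [Nat.add_sub_cancel' hk.le] at this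
    omega
  · have hkC : A l k ≤ C := Finset.le_sup (Finset.mem_range.2 (by omega))
    have := hstep (n - N₀)
    rw [Nat.add_sub_cancel' (by omega : N₀ ≤ n)] at this
    omega

end Part2

namespace Part3

open LSAux Part2

variable (l : ℕ → ℕ) (hlpos : ∀ n, 0 < l n)

include hlpos in
lemma A_gap {n : ℕ} (h : l (n+1) ≤ n + 1) :
    A l n + (n+2) * (2*n+2).factorial ≤ A l (n+1) := by
  have h1 : A l n ≤ (n+1) * (2*n+1).factorial := by
    unfold A
    calc (2*n+1).factorial * l (n+1) ≤ (2*n+1).factorial * (n+1) :=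
          Nat.mul_le_mul_left _ h
      _ = (n+1) * (2*n+1).factorial := Nat.mul_comm _ _
  have h2 : (2*n+3) * ((2*n+2) * (2*n+1).factorial) ≤ A l (n+1) := by
    unfold A
    rw [fact_succ_succ]
    exact Nat.le_mul_of_pos_right _ (hlpos _)
  have h3 : (2*n+2).factorial = (2*n+2) * (2*n+1).factorial := by
    rw [show 2*n+2 = (2*n+1)+1 by ring, Nat.factorial_succ]
  have h4 : 0 < (2*n+1).factorial := (2*n+1).factorial_pos
  rw [h3]
  nlinarith [h1, h2, h4]

include hlpos in
lemma xi_irrational (hln : Filter.Tendsto (fun n => (l n : ℝ) / n) Filter.atTop (nhds 0)) :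
    Irrational (∑' m, f l m) := by
  obtain ⟨N, hN1, hN2⟩ := exists_master l hlpos hln
  rintro ⟨q, hq⟩
  set a : ℤ := q.num with ha
  set b : ℤ := (q.den : ℤ) with hbdef
  have hb : 0 < b := by rw [hbdef]; exact_mod_cast q.pos
  have hrat : (∑' m, f l m) = (a:ℝ) / b := by
    rw [← hq, Rat.cast_def]; rfl
  set n := max N (2 * b.toNat + 2) with hn
  have hnN : N ≤ n := le_max_left _ _
  have hbn : (2 * (b:ℝ)) < 2 ^ n := by
    have h1 : 2 * b.toNat + 2 ≤ n := le_max_right _ _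
    have h2 : n < 2 ^ n := Nat.lt_two_pow_self
    have : 2 * b.toNat < 2 ^ n := by omega
    have hbt : (b.toNat : ℝ) = (b : ℝ) := by
      exact_mod_cast congrArg (fun z : ℤ => (z : ℝ)) (Int.toNat_of_nonneg hb.le)
    calc (2 * (b:ℝ)) = ((2 * b.toNat : ℕ) : ℝ) := by push_cast [hbt]; ring
      _ < ((2^n : ℕ) : ℝ) := by exact_mod_cast this
      _ = 2 ^ n := by push_cast; ring
  -- decomposition
  have hmono : ∀ k ≤ n, A l k ≤ A l n := by
    intro k hk
    rcases eq_or_lt_of_le hk with rfl | hk'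
    · exact le_rfl
    · exact (hN2 n k hnN hk').le
  have hkey := key_eq l hlpos hmono
  set T := ∑' i, f l (i + (n+1)) with hT
  have hTpos : 0 < T := lt_of_lt_of_le (by positivity) (tail_pos l hlpos (n+1))
  have hTle : T ≤ 2 * ((2:ℝ) ^ A l (n+1))⁻¹ := tail_le l hlpos hN1 (by omega)
  -- the integer D
  set D : ℤ := a * 2 ^ A l n - b * p l n with hD
  have hbR : (0:ℝ) < (b:ℝ) := by exact_mod_cast hb
  have hbmul : (b:ℝ) * (∑' m, f l m) = (a:ℝ) := by
    rw [hrat]; field_simp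
  have hDr : (D : ℝ) = (b:ℝ) * (2 ^ A l n * T) := by
    push_cast [hD]
    linear_combination (b:ℝ) * hkey - (2:ℝ)^(A l n) * hbmul
  have hDpos : 0 < D := by
    have : (0:ℝ) < (D:ℝ) := by
      rw [hDr]
      have hbR : (0:ℝ) < (b:ℝ) := by exact_mod_cast hb
      positivity
    exact_mod_cast this
  have hD1 : (1:ℝ) ≤ (D:ℝ) := by exact_mod_cast hDpos
  -- derive contradiction
  have hub : (1:ℝ) ≤ (b:ℝ) * (2 ^ A l n * (2 * ((2:ℝ) ^ A l (n+1))⁻¹)) := by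
    refine le_trans hD1 ?_
    rw [hDr]
    apply mul_le_mul_of_nonneg_left _ hbR.le
    exact mul_le_mul_of_nonneg_left hTle (by positivity)
  have hpow : (2:ℝ) ^ A l (n+1) ≤ 2 * (b:ℝ) * 2 ^ A l n := by
    have hpos : (0:ℝ) < (2:ℝ) ^ A l (n+1) := by positivity
    rw [← div_le_iff₀' (by positivity)] at hub ⊢
    · calc (2:ℝ) ^ A l (n+1) / (2 * (b:ℝ)) = 1 / ((b:ℝ) * (2 * ((2:ℝ) ^ A l (n+1))⁻¹)) := by
            field_simp
        _ ≤ 2 ^ A l n := by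
            rw [div_le_iff₀ (by positivity)] at hub ⊢
            · linarith [hub]
  have hlt : (2:ℝ) ^ A l (n+1) < 2 ^ (A l n + n) := by
    calc (2:ℝ) ^ A l (n+1) ≤ 2 * (b:ℝ) * 2 ^ A l n := hpow
      _ < 2 ^ n * 2 ^ A l n := by
          apply mul_lt_mul_of_pos_right hbn (by positivity)
      _ = 2 ^ (A l n + n) := by rw [← pow_add]; ring_nf
  have hexp : A l (n+1) < A l n + n := by
    exact_mod_cast (pow_lt_pow_iff_right₀ (by norm_num : (1:ℝ) < 2)).mp hlt
  have hgap := A_gap l hlpos (h := hN1 (n+1) (by omega))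
  have hfac : n + 2 ≤ (n+2) * (2*n+2).factorial :=
    Nat.le_mul_of_pos_right _ (Nat.factorial_pos _)
  omega

end Part3

namespace Part4

open LSAux Part2 Part3

lemma cast_pow_rpow (M : ℕ) (y : ℝ) : ((2 ^ M : ℕ) : ℝ) ^ y = (2:ℝ) ^ ((M:ℝ) * y) := by
  push_cast
  rw [← Real.rpow_natCast 2 M, ← Real.rpow_mul (by norm_num)]

lemma two_rpow_mono {x y : ℝ} (h : x ≤ y) : (2:ℝ) ^ x ≤ (2:ℝ) ^ y :=
  (Real.rpow_le_rpow_left_iff (by norm_num)).2 h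

variable (l : ℕ → ℕ) (hlpos : ∀ n, 0 < l n)

include hlpos in
lemma mem_part (hln : Filter.Tendsto (fun n => (l n : ℝ) / n) Filter.atTop (nhds 0)) :
    (∑' m, f l m) ∈
      LSet (fun n => 2 ^ ((2 * (n + 1)).factorial) : ℕ → ℕ) (fun n => (n : ℝ) + 1) := by
  obtain ⟨N, hN1, hN2⟩ := exists_master l hlpos hln
  refine ⟨xi_irrational l hlpos hln, 1, 1, one_pos, one_pos, fun n => 2 ^ A l n, ?_⟩
  filter_upwards [eventually_ge_atTop N] with n hn
  have hl1 : l (n+1) ≤ n + 1 := hN1 (n+1) (by omega)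
  have hmono : ∀ k ≤ n, A l k ≤ A l n := by
    intro k hk
    rcases eq_or_lt_of_le hk with rfl | hk'
    · exact le_rfl
    · exact (hN2 n k hn hk').le
  refine ⟨Nat.one_le_two_pow, ?_, ?_⟩
  · -- size bound
    rw [Real.rpow_one]
    have hAle : A l n ≤ (2*(n+1)).factorial := by
      unfold A
      rw [show 2*(n+1) = (2*n+1)+1 by ring, Nat.factorial_succ]
      calc (2*n+1).factorial * l (n+1) ≤ (2*n+1).factorial * (2*n+1+1) :=
            Nat.mul_le_mul_left _ (by omega)
        _ = (2*n+1+1) * (2*n+1).factorial := Nat.mul_comm _ _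
    exact_mod_cast Nat.pow_le_pow_right (by norm_num) hAle
  · -- approximation bound
    have hkey := key_eq l hlpos hmono
    set S := ∑' m, f l m with hS
    set T := ∑' i, f l (i + (n+1)) with hT
    have hTpos : 0 < T := lt_of_lt_of_le (by positivity) (tail_pos l hlpos (n+1))
    have hTle : T ≤ 2 * ((2:ℝ) ^ A l (n+1))⁻¹ := tail_le l hlpos hN1 (by omega)
    have hBS : ((2 ^ A l n : ℕ) : ℝ) * S - (p l n : ℤ) = 2 ^ A l n * T := by
      push_cast
      linear_combination hkey
    have hgap := A_gap l hlpos hl1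
    calc distNearestInt (((2 ^ A l n : ℕ) : ℝ) * S)
        ≤ |((2 ^ A l n : ℕ) : ℝ) * S - ((p l n : ℤ) : ℝ)| := round_le _ _
      _ = 2 ^ A l n * T := by rw [hBS]; exact abs_of_pos (by positivity)
      _ ≤ 2 ^ A l n * (2 * ((2:ℝ) ^ A l (n+1))⁻¹) := by
          exact mul_le_mul_of_nonneg_left hTle (by positivity)
      _ = (2:ℝ) ^ ((A l n : ℝ) + 1 - (A l (n+1) : ℝ)) := by
          rw [Real.rpow_sub two_pos, Real.rpow_add two_pos, Real.rpow_one,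
            Real.rpow_natCast, Real.rpow_natCast]
          ring
      _ ≤ (2:ℝ) ^ ((((2*(n+1)).factorial : ℕ) : ℝ) * (-(1 * ((n:ℝ) + 1)))) := by
          apply two_rpow_mono
          have hnat : A l n + 1 + (n+1) * (2*n+2).factorial ≤ A l (n+1) := by
            have h1 : 1 + (n+1) * (2*n+2).factorial ≤ (n+2) * (2*n+2).factorial := by
              have := (2*n+2).factorial_pos
              nlinarith
            omega
          have hc : ((2*(n+1) : ℕ)) = 2*n+2 := by ring
          rw [hc]
          have hcast : ((A l n : ℝ)) + 1 + ((n:ℝ)+1) * ((2*n+2).factorial : ℝ)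
              ≤ (A l (n+1) : ℝ) := by exact_mod_cast hnat
          nlinarith [hcast]
      _ = (((2 ^ ((2*(n+1)).factorial) : ℕ) : ℝ)) ^ (-(1 * ((n:ℝ) + 1))) := by
          rw [cast_pow_rpow]

end Part4

namespace Part5

open LSAux Part2 Part3 Part4

variable (l : ℕ → ℕ) (hlpos : ∀ n, 0 < l n)

set_option maxHeartbeats 1000000 in
include hlpos in
lemma not_mem_part (hl : Filter.Tendsto l Filter.atTop Filter.atTop)
    (hln : Filter.Tendsto (fun n => (l n : ℝ) / n) Filter.atTop (nhds 0)) :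
    (∑' m, f l m) ∉
      LSet (fun n => 2 ^ ((n + 1).factorial) : ℕ → ℕ) (fun n => (n : ℝ) + 1) := by
  rintro ⟨-, κ₁, κ₂, hκ₁, hκ₂, b, hb⟩
  obtain ⟨N, hN1, hN2⟩ := exists_master l hlpos hln
  have h2n : Tendsto (fun n : ℕ => 2 * n) atTop atTop :=
    tendsto_atTop_mono (fun n => by simp only [id_eq]; omega) tendsto_id
  have hb2 := h2n.eventually hb
  have hshift : Tendsto (fun n : ℕ => n + 1) atTop atTop :=
    tendsto_atTop_mono (fun n => by simp only [id_eq]; omega) tendsto_id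
  -- eventually κ₁ < l (n+1)
  have hev2 : ∀ᶠ n : ℕ in atTop, κ₁ < (l (n+1) : ℝ) := by
    have h := hshift.eventually (hl.eventually (eventually_gt_atTop ⌈κ₁⌉₊))
    filter_upwards [h] with n hn
    exact lt_of_le_of_lt (Nat.le_ceil κ₁) (by exact_mod_cast hn)
  -- eventually l (n+1) < κ₂ * (n+1)
  have hev3a : ∀ᶠ n : ℕ in atTop, (l (n+1) : ℝ) < κ₂ * ((n:ℝ)+1) := by
    have h := hshift.eventually ((tendsto_order.1 hln).2 κ₂ hκ₂)
    filter_upwards [h, eventually_ge_atTop 0] with n hn _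
    have hpos : (0:ℝ) < ((n+1 : ℕ):ℝ) := by positivity
    have := (div_lt_iff₀ hpos).1 hn
    push_cast at this ⊢
    linarith
  have hev3b : ∀ᶠ n : ℕ in atTop, (1:ℝ) ≤ κ₂ * n :=
    (tendsto_natCast_atTop_atTop.const_mul_atTop hκ₂).eventually_ge_atTop 1
  have hev4 : ∀ᶠ n : ℕ in atTop, κ₁ + 3 ≤ (n:ℝ) :=
    tendsto_natCast_atTop_atTop.eventually_ge_atTop (κ₁ + 3)
  have hmain : ∀ᶠ n : ℕ in atTop, False := by
    filter_upwards [hb2, eventually_ge_atTop N, hev2, hev3a, hev3b, hev4] with n hbn hnN hκl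
      hl3a hl3b hn4
    obtain ⟨hB1, hB2, hB3⟩ := hbn
    set S := ∑' m, f l m with hSdef
    set B := b (2*n) with hBdef
    set F : ℝ := ((2*n+1).factorial : ℝ) with hFdef
    have hF1 : (1:ℝ) ≤ F := by
      rw [hFdef]; exact_mod_cast (2*n+1).factorial_pos
    have hB2' : (B:ℝ) ≤ (2:ℝ) ^ (F * κ₁) := by
      rwa [cast_pow_rpow] at hB2
    have hB3' : distNearestInt ((B:ℝ) * S) ≤ (2:ℝ) ^ (F * (-(κ₂ * (((2*n:ℕ):ℝ) + 1)))) := by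
      rwa [cast_pow_rpow] at hB3
    -- decomposition of S at level n
    have hmono : ∀ k ≤ n, A l k ≤ A l n := by
      intro k hk
      rcases eq_or_lt_of_le hk with rfl | hk'
      · exact le_rfl
      · exact (hN2 n k hnN hk').le
    have hkey := key_eq l hlpos hmono
    set T := ∑' i, f l (i + (n+1)) with hTdef
    have hTpos : 0 < T := lt_of_lt_of_le (by positivity) (tail_pos l hlpos (n+1))
    have hTle : T ≤ 2 * ((2:ℝ) ^ A l (n+1))⁻¹ := tail_le l hlpos hN1 (by omega)
    set P := p l n with hPdef
    set r : ℤ := round ((B:ℝ) * S) with hrdef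
    have hdist : |(B:ℝ) * S - r| = distNearestInt ((B:ℝ) * S) := rfl
    set D : ℤ := r * (2 ^ A l n : ℕ) - (B:ℤ) * (P:ℤ) with hDdef
    have hDr : (D:ℝ) = 2 ^ A l n * ((r:ℝ) - (B:ℝ)*S) + (B:ℝ) * (2 ^ A l n * T) := by
      rw [hDdef]
      push_cast
      linear_combination (B:ℝ) * hkey
    have hAcast : (A l n : ℝ) = F * (l (n+1) : ℝ) := by
      rw [hFdef]; unfold A; push_cast; ring
    -- bound the first term
    have hbd1 : (2:ℝ) ^ A l n * |(B:ℝ)*S - (r:ℝ)| ≤ (2:ℝ) ^ (-1:ℝ) := by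
      calc (2:ℝ) ^ A l n * |(B:ℝ)*S - (r:ℝ)|
          ≤ (2:ℝ) ^ A l n * (2:ℝ) ^ (F * (-(κ₂ * (((2*n:ℕ):ℝ) + 1)))) := by
            rw [hdist]
            exact mul_le_mul_of_nonneg_left hB3' (by positivity)
        _ = (2:ℝ) ^ ((A l n : ℝ) + F * (-(κ₂ * (((2*n:ℕ):ℝ) + 1)))) := by
            rw [← Real.rpow_natCast 2 (A l n), ← Real.rpow_add two_pos]
        _ ≤ (2:ℝ) ^ (-1:ℝ) := by
            apply two_rpow_mono
            have hcast2n : ((2*n:ℕ):ℝ) = 2*(n:ℝ) := by push_cast; ring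
            rw [hAcast, hcast2n]
            have hstep : (l (n+1) : ℝ) + 1 ≤ κ₂ * (2*(n:ℝ)+1) := by nlinarith
            nlinarith [mul_le_mul_of_nonneg_left hstep (le_trans zero_le_one hF1)]
    -- bound the second term
    have hgap := A_gap l hlpos (hN1 (n+1) (by omega))
    have hfaccast : ((2*n+2).factorial : ℝ) = (2*(n:ℝ)+2) * F := by
      rw [hFdef, show 2*n+2 = (2*n+1)+1 by ring, Nat.factorial_succ]
      push_cast; ring
    have hbd2 : (B:ℝ) * ((2:ℝ) ^ A l n * T) ≤ (2:ℝ) ^ (-2:ℝ) := by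
      calc (B:ℝ) * ((2:ℝ) ^ A l n * T)
          ≤ (2:ℝ) ^ (F * κ₁) * ((2:ℝ) ^ A l n * (2 * ((2:ℝ) ^ A l (n+1))⁻¹)) := by
            apply mul_le_mul hB2' _ (by positivity) (by positivity)
            exact mul_le_mul_of_nonneg_left hTle (by positivity)
        _ = (2:ℝ) ^ (F * κ₁ + (A l n : ℝ) + 1 - (A l (n+1) : ℝ)) := by
            rw [← Real.rpow_natCast 2 (A l n), ← Real.rpow_natCast 2 (A l (n+1)),
              Real.rpow_sub two_pos, Real.rpow_add two_pos, Real.rpow_add two_pos,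
              Real.rpow_one]
            ring
        _ ≤ (2:ℝ) ^ (-2:ℝ) := by
            apply two_rpow_mono
            have hgapR : (A l n : ℝ) + ((n:ℝ)+2) * ((2*n+2).factorial:ℝ) ≤ (A l (n+1) : ℝ) := by
              exact_mod_cast hgap
            rw [hfaccast] at hgapR
            have h0F : (0:ℝ) ≤ F := by linarith
            have hc1 : F * (κ₁ + 3) ≤ F * (n:ℝ) := mul_le_mul_of_nonneg_left hn4 h0F
            have hc2 : (n:ℝ) * F ≤ (((n:ℝ)+2) * (2*(n:ℝ)+2)) * F := by
              apply mul_le_mul_of_nonneg_right _ h0F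
              nlinarith [sq_nonneg ((n:ℝ))]
            nlinarith [hc1, hc2]
    -- |D| < 1 hence D = 0
    have hDbound : |(D:ℝ)| < 1 := by
      have h1 : (2:ℝ) ^ (-1:ℝ) = 1/2 := by
        rw [show (-1:ℝ) = ((-1:ℤ):ℝ) by norm_num, Real.rpow_intCast]; norm_num
      have h2 : (2:ℝ) ^ (-2:ℝ) = 1/4 := by
        rw [show (-2:ℝ) = ((-2:ℤ):ℝ) by norm_num, Real.rpow_intCast]; norm_num
      calc |(D:ℝ)| ≤ (2:ℝ) ^ A l n * |(B:ℝ)*S - (r:ℝ)| + (B:ℝ) * ((2:ℝ) ^ A l n * T) := by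
            rw [hDr]
            refine le_trans (abs_add_le _ _) ?_
            apply add_le_add
            · rw [abs_mul, abs_of_nonneg (by positivity : (0:ℝ) ≤ (2:ℝ) ^ A l n), abs_sub_comm]
            · rw [abs_mul]
              rw [abs_of_nonneg (by positivity : (0:ℝ) ≤ (B:ℝ))]
              apply mul_le_mul_of_nonneg_left _ (by positivity)
              rw [abs_of_nonneg (by positivity : (0:ℝ) ≤ 2 ^ A l n * T)]
        _ ≤ (2:ℝ) ^ (-1:ℝ) + (2:ℝ) ^ (-2:ℝ) := add_le_add hbd1 hbd2
        _ < 1 := by rw [h1, h2]; norm_num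
    have hD0 : D = 0 := by
      have habs : |D| < 1 := by
        have : ((|D| : ℤ) : ℝ) < 1 := by rw [Int.cast_abs]; exact hDbound
        exact_mod_cast this
      have := abs_lt.mp habs
      omega
    -- divisibility
    have hdvd : (2 ^ A l n : ℕ) ∣ B * P := by
      have : ((2 ^ A l n : ℕ) : ℤ) ∣ ((B * P : ℕ) : ℤ) := by
        refine ⟨r, ?_⟩
        push_cast
        rw [hDdef] at hD0
        push_cast at hD0
        linarith
      exact_mod_cast this
    have hodd : P % 2 = 1 := p_odd l (fun k hk => hN2 n k hnN hk)
    have hcop : Nat.Coprime (2 ^ A l n) P := by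
      apply Nat.Coprime.pow_left
      rw [Nat.Prime.coprime_iff_not_dvd Nat.prime_two]
      intro hdd
      obtain ⟨t, ht⟩ := hdd
      omega
    have hQB : (2 ^ A l n : ℕ) ∣ B := hcop.dvd_of_dvd_mul_right hdvd
    have hQleB : (2 ^ A l n : ℕ) ≤ B := Nat.le_of_dvd (by omega) hQB
    -- final contradiction
    have hfin : (2:ℝ) ^ ((A l n : ℕ) : ℝ) ≤ (2:ℝ) ^ (F * κ₁) := by
      rw [Real.rpow_natCast]
      calc (2:ℝ) ^ A l n = ((2 ^ A l n : ℕ) : ℝ) := by push_cast; ring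
        _ ≤ (B:ℝ) := by exact_mod_cast hQleB
        _ ≤ (2:ℝ) ^ (F * κ₁) := hB2'
    have hexp : (A l n : ℝ) ≤ F * κ₁ :=
      (Real.rpow_le_rpow_left_iff (by norm_num)).1 hfin
    rw [hAcast] at hexp
    nlinarith [hexp, hF1, hκl]
  exact hmain.exists.choose_spec

end Part5


/-- The number ξ = Σ 2^{-(2n-1)!·λ_n} belongs to S_{q'} but not to S_q,
where q_n = 2^{n!} and q'_n = 2^{(2n)!}. -/
theorem mem_LSet_sub_not_mem (l : ℕ → ℕ) (hlpos : ∀ n, 0 < l n)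
    (hl : Filter.Tendsto l Filter.atTop Filter.atTop)
    (hln : Filter.Tendsto (fun n => (l n : ℝ) / n) Filter.atTop (nhds 0)) :
    (∑' n : ℕ, ((2 : ℝ) ^ ((2 * n + 1).factorial * l (n + 1)))⁻¹) ∈
        LSet (fun n => 2 ^ ((2 * (n + 1)).factorial) : ℕ → ℕ) (fun n => (n : ℝ) + 1) ∧
    (∑' n : ℕ, ((2 : ℝ) ^ ((2 * n + 1).factorial * l (n + 1)))⁻¹) ∉
        LSet (fun n => 2 ^ ((n + 1).factorial) : ℕ → ℕ) (fun n => (n : ℝ) + 1) := by 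
  have heq : (∑' n : ℕ, ((2 : ℝ) ^ ((2 * n + 1).factorial * l (n + 1)))⁻¹)
      = ∑' m, LSAux.f l m := rfl
  rw [heq]
  exact ⟨Part4.mem_part l hlpos hln, Part5.not_mem_part l hlpos hl hln⟩
end

section
/- Let u = (u_n) satisfy √(u_{n+1}) ≤ u_n + 1 ≤ u_{n+1} for all n. Then every increasing sequence q of positive integers has a subsequence q' such that S_{q',u} strictly contains S_{q,u}. -/
open Filter

namespace LiouvilleAux

noncomputable def nIdx (u : ℕ → ℝ) (iprev a n : ℕ) : ℕ :=
  max (iprev + 1) (max (2 ^ a) (n + ⌈(n : ℝ) * (u n + 2)⌉₊))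

noncomputable def gp (u : ℕ → ℝ) (q : ℕ → ℕ) (a idx n : ℕ) : ℕ :=
  max (a + 5) (⌈(u n + 3) * Real.logb 2 (q idx)⌉₊ + 5)

noncomputable def AI (u : ℕ → ℝ) (q : ℕ → ℕ) : ℕ → ℕ × ℕ
  | 0 => (3, nIdx u 0 3 0)
  | n + 1 =>
      let p := AI u q n
      (p.1 + gp u q p.1 p.2 n, nIdx u p.2 (p.1 + gp u q p.1 p.2 n) (n + 1))

variable (u : ℕ → ℝ) (q : ℕ → ℕ)

noncomputable def A (n : ℕ) : ℕ := (AI u q n).1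
noncomputable def J (n : ℕ) : ℕ := (AI u q n).2
noncomputable def g (n : ℕ) : ℕ := gp u q (A u q n) (J u q n) n

lemma A_zero : A u q 0 = 3 := rfl
lemma A_succ (n : ℕ) : A u q (n + 1) = A u q n + g u q n := by
  simp [A, g, J, AI]
lemma J_zero : J u q 0 = nIdx u 0 (A u q 0) 0 := rfl
lemma J_succ (n : ℕ) : J u q (n + 1) = nIdx u (J u q n) (A u q (n + 1)) (n + 1) := by
  simp [A, g, J, AI]

lemma g_ge (n : ℕ) : A u q n + 5 ≤ g u q n := le_max_left _ _
lemma g_ge' (n : ℕ) :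
    ⌈(u n + 3) * Real.logb 2 (q (J u q n))⌉₊ + 5 ≤ g u q n := le_max_right _ _

lemma A_mono : StrictMono (A u q) := by
  apply strictMono_nat_of_lt_succ
  intro n
  have := g_ge u q n
  rw [A_succ]
  omega

lemma A_ge (n : ℕ) : n + 3 ≤ A u q n := by
  induction n with
  | zero => simp [A_zero]
  | succ n ih =>
    have h1 := g_ge u q n
    rw [A_succ]
    omega

lemma A_add_le (n k : ℕ) : A u q n + k ≤ A u q (n + k) := by
  induction k with
  | zero => simp
  | succ k ih =>
    have h1 := g_ge u q (n + k)
    have h2 := A_succ u q (n + k)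
    have : n + (k + 1) = (n + k) + 1 := by omega
    rw [this]
    omega

lemma pow_le_J (n : ℕ) : 2 ^ A u q n ≤ J u q n := by
  cases n with
  | zero => rw [J_zero]; exact le_max_of_le_right (le_max_left _ _)
  | succ n => rw [J_succ]; exact le_max_of_le_right (le_max_left _ _)

lemma ceil_le_J (n : ℕ) : n + ⌈(n : ℝ) * (u n + 2)⌉₊ ≤ J u q n := by
  cases n with
  | zero => rw [J_zero]; exact le_max_of_le_right (le_max_right _ _)
  | succ n => rw [J_succ]; exact le_max_of_le_right (le_max_right _ _)

lemma n_le_J (n : ℕ) : n ≤ J u q n := le_trans (Nat.le_add_right _ _) (ceil_le_J u q n)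

lemma J_mono : StrictMono (J u q) := by
  apply strictMono_nat_of_lt_succ
  intro n
  rw [J_succ]
  exact lt_of_lt_of_le (Nat.lt_succ_self _) (le_max_left _ _)


noncomputable def xf (k : ℕ) : ℝ := ((2:ℝ) ^ A u q k)⁻¹

noncomputable def xi : ℝ := ∑' k, xf u q k

lemma xf_pos (k : ℕ) : 0 < xf u q k := by unfold xf; positivity

lemma xf_le (k : ℕ) : xf u q k ≤ (1/2) ^ k := by
  have h : (2:ℝ) ^ k ≤ 2 ^ (A u q k) :=
    pow_le_pow_right₀ one_le_two (le_trans (Nat.le_add_right k 3) (A_ge u q k))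
  rw [one_div, inv_pow]
  exact inv_anti₀ (by positivity) h

lemma xf_summable : Summable (xf u q) :=
  Summable.of_nonneg_of_le (fun k => (xf_pos u q k).le) (xf_le u q) summable_geometric_two

noncomputable def P (n : ℕ) : ℕ := ∑ k ∈ Finset.range (n + 1), 2 ^ (A u q n - A u q k)

noncomputable def tl (n : ℕ) : ℝ := ∑' k, xf u q (k + (n + 1))

noncomputable def t (n : ℕ) : ℝ := (2:ℝ) ^ A u q n * tl u q n

lemma tl_summable (n : ℕ) : Summable (fun k => xf u q (k + (n + 1))) :=
  (summable_nat_add_iff (n + 1)).mpr (xf_summable u q)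

lemma key_split (n : ℕ) : (2:ℝ) ^ A u q n * xi u q = (P u q n : ℝ) + t u q n := by
  have h := Summable.sum_add_tsum_nat_add (f := xf u q) (n + 1) (xf_summable u q)
  have hxi : xi u q = (∑ k ∈ Finset.range (n + 1), xf u q k) + tl u q n := by
    rw [xi, ← h]; rfl
  rw [hxi, mul_add]
  congr 1
  rw [Finset.mul_sum, P]
  push_cast
  apply Finset.sum_congr rfl
  intro k hk
  have hk' : A u q k ≤ A u q n := (A_mono u q).monotone (Nat.lt_succ_iff.mp (Finset.mem_range.mp hk))
  rw [xf]
  have h2 : (2:ℝ) ^ A u q n = 2 ^ (A u q n - A u q k) * 2 ^ A u q k := by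
    rw [← pow_add, Nat.sub_add_cancel hk']
  rw [h2]
  field_simp

lemma P_odd (n : ℕ) : ¬ 2 ∣ P u q n := by
  have hP : P u q n = (∑ k ∈ Finset.range n, 2 ^ (A u q n - A u q k)) + 1 := by
    rw [P, Finset.sum_range_succ, Nat.sub_self, pow_zero]
  have h2 : 2 ∣ ∑ k ∈ Finset.range n, 2 ^ (A u q n - A u q k) := by
    apply Finset.dvd_sum
    intro k hk
    exact dvd_pow_self 2 (Nat.sub_ne_zero_of_lt (A_mono u q (Finset.mem_range.mp hk)))
  omega

lemma tl_pos (n : ℕ) : 0 < tl u q n :=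
  Summable.tsum_pos (tl_summable u q n) (fun k => (xf_pos u q _).le) 0 (xf_pos u q _)

lemma tl_ge (n : ℕ) : xf u q (n + 1) ≤ tl u q n := by
  have := Summable.le_tsum (tl_summable u q n) 0 (fun j _ => (xf_pos u q _).le)
  simpa [tl] using this

lemma tl_le (n : ℕ) : tl u q n ≤ 2 * xf u q (n + 1) := by
  have hle : ∀ k, xf u q (k + (n + 1)) ≤ xf u q (n + 1) * (1/2) ^ k := by
    intro k
    rw [xf, xf, one_div, inv_pow, ← mul_inv, ← pow_add]
    apply inv_anti₀ (by positivity)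
    apply pow_le_pow_right₀ one_le_two
    have h := A_add_le u q (n + 1) k
    rw [add_comm k (n + 1)]
    omega
  calc tl u q n ≤ ∑' k, xf u q (n + 1) * (1/2) ^ k :=
        Summable.tsum_le_tsum hle (tl_summable u q n) (summable_geometric_two.mul_left _)
    _ = xf u q (n + 1) * 2 := by rw [tsum_mul_left, tsum_geometric_two]
    _ = 2 * xf u q (n + 1) := mul_comm _ _

lemma t_pos (n : ℕ) : 0 < t u q n := mul_pos (by positivity) (tl_pos u q n)

lemma xf_succ (n : ℕ) : (2:ℝ) ^ A u q n * xf u q (n + 1) = ((2:ℝ) ^ g u q n)⁻¹ := by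
  rw [xf, A_succ, pow_add, mul_inv]
  field_simp

lemma t_ge (n : ℕ) : ((2:ℝ) ^ g u q n)⁻¹ ≤ t u q n := by
  rw [← xf_succ u q n, t]
  have := tl_ge u q n
  have h2 : (0:ℝ) < 2 ^ A u q n := by positivity
  nlinarith

lemma t_le (n : ℕ) : t u q n ≤ 2 * ((2:ℝ) ^ g u q n)⁻¹ := by
  rw [← xf_succ u q n, t]
  have := tl_le u q n
  have h2 : (0:ℝ) < 2 ^ A u q n := by positivity
  nlinarith

lemma g_big (n : ℕ) : (2:ℝ) ^ A u q n * 32 ≤ 2 ^ g u q n := by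
  have h : A u q n + 5 ≤ g u q n := g_ge u q n
  calc (2:ℝ) ^ A u q n * 32 = 2 ^ (A u q n + 5) := by rw [pow_add]; norm_num
    _ ≤ 2 ^ g u q n := pow_le_pow_right₀ one_le_two h

lemma t_lt_half (n : ℕ) : t u q n < 1/2 := by
  have h1 := t_le u q n
  have h2 := g_big u q n
  have h3 : (8:ℝ) ≤ 2 ^ A u q n := by
    calc (8:ℝ) = 2 ^ 3 := by norm_num
      _ ≤ 2 ^ A u q n := pow_le_pow_right₀ one_le_two (by have := A_ge u q n; omega)
  have h4 : (0:ℝ) < 2 ^ g u q n := by positivity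
  have h5 : (256:ℝ) ≤ 2 ^ g u q n := by nlinarith
  have h6 : (2:ℝ) * (2 ^ g u q n)⁻¹ ≤ 2 / 256 := by
    rw [div_eq_mul_inv]
    have := inv_anti₀ (by norm_num : (0:ℝ) < 256) h5
    nlinarith
  linarith


end LiouvilleAux

lemma dNI_int_add (m : ℤ) (y : ℝ) : distNearestInt ((m:ℝ) + y) = distNearestInt y := by
  unfold distNearestInt
  rw [round_intCast_add]
  congr 1
  push_cast
  ring

lemma dNI_nat_add (m : ℕ) (y : ℝ) : distNearestInt ((m:ℝ) + y) = distNearestInt y := by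
  have := dNI_int_add (m : ℤ) y
  push_cast at this
  exact this

lemma dNI_eq_self {y : ℝ} (h0 : 0 < y) (h2 : y < 1/2) : distNearestInt y = y := by
  unfold distNearestInt
  rw [round_eq_zero_iff.mpr (Set.mem_Ico.mpr ⟨by linarith, h2⟩)]
  simp [abs_of_pos h0]

namespace LiouvilleAux

variable (u : ℕ → ℝ) (q : ℕ → ℕ)

lemma keyLower (n : ℕ) (b : ℕ) (hb1 : 1 ≤ b)
    (hb2 : (b : ℝ) * 8 ≤ 2 ^ g u q n) :
    ((2:ℝ) ^ g u q n)⁻¹ ≤ distNearestInt ((b:ℝ) * xi u q) := by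
  have hgpos : (0:ℝ) < 2 ^ g u q n := by positivity
  have hApos : (0:ℝ) < 2 ^ A u q n := by positivity
  have hA1 : (1:ℝ) ≤ 2 ^ A u q n := by exact_mod_cast Nat.one_le_two_pow (n := A u q n)
  have hg32 := g_big u q n
  have htle := t_le u q n
  have htpos := t_pos u q n
  by_cases hdvd : 2 ^ A u q n ∣ b
  · obtain ⟨k, hk⟩ := hdvd
    have hk1 : 1 ≤ k := by
      rcases Nat.eq_zero_or_pos k with h | h
      · subst h; omega
      · exact h
    have hk1R : (1:ℝ) ≤ (k:ℝ) := by exact_mod_cast hk1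
    have hbk : (b:ℝ) = 2 ^ A u q n * (k:ℝ) := by rw [hk]; push_cast; ring
    have hexp : (b:ℝ) * xi u q = ((k * P u q n : ℕ) : ℝ) + (k:ℝ) * t u q n := by
      have h1 : (b:ℝ) * xi u q = (k:ℝ) * ((2:ℝ) ^ A u q n * xi u q) := by rw [hbk]; ring
      rw [h1, key_split]
      push_cast
      ring
    have hkb : (k:ℝ) * 8 * 2 ^ A u q n ≤ 2 ^ g u q n := by
      rw [hbk] at hb2; nlinarith
    have h8k : (8:ℝ) * (k:ℝ) ≤ 2 ^ g u q n := by nlinarith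
    have hktpos : 0 < (k:ℝ) * t u q n := by nlinarith
    have hktlt : (k:ℝ) * t u q n < 1/2 := by
      have hkpos : (0:ℝ) < (k:ℝ) := by linarith
      have h1 : (k:ℝ) * t u q n ≤ (k:ℝ) * (2 * (2 ^ g u q n)⁻¹) :=
        mul_le_mul_of_nonneg_left htle hkpos.le
      have h2 : (2 ^ g u q n : ℝ)⁻¹ ≤ (8 * (k:ℝ))⁻¹ :=
        inv_anti₀ (by linarith) h8k
      have h3 : (k:ℝ) * (2 * (2 ^ g u q n)⁻¹) ≤ (k:ℝ) * (2 * (8 * (k:ℝ))⁻¹) := by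
        apply mul_le_mul_of_nonneg_left _ hkpos.le
        nlinarith
      have h4 : (k:ℝ) * (2 * (8 * (k:ℝ))⁻¹) = 1/4 := by
        field_simp
        ring
      linarith
    rw [hexp, dNI_nat_add, dNI_eq_self hktpos hktlt]
    have := t_ge u q n
    nlinarith
  · by_contra hcon
    push_neg at hcon
    set r := round ((b:ℝ) * xi u q) with hr
    have hd : distNearestInt ((b:ℝ) * xi u q) = |(b:ℝ) * xi u q - r| := rfl
    set N : ℤ := (b:ℤ) * (P u q n : ℤ) - r * 2 ^ A u q n with hN
    have hNr : (N:ℝ) = 2 ^ A u q n * ((b:ℝ) * xi u q - r) - (b:ℝ) * t u q n := by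
      push_cast [hN]
      linear_combination (-(b:ℝ)) * key_split u q n
    have hbt : (b:ℝ) * t u q n ≤ 1/4 := by
      have h1 : (b:ℝ) * t u q n ≤ (b:ℝ) * (2 * (2 ^ g u q n)⁻¹) :=
        mul_le_mul_of_nonneg_left htle (Nat.cast_nonneg b)
      have h2 : (b:ℝ) * (2 * (2 ^ g u q n)⁻¹) ≤ (2 ^ g u q n / 8) * (2 * (2 ^ g u q n)⁻¹) := by
        apply mul_le_mul_of_nonneg_right (by linarith) (by positivity)
      have h3 : (2 ^ g u q n / 8 : ℝ) * (2 * (2 ^ g u q n)⁻¹) = 1/4 := by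
        field_simp
        ring
      linarith
    have hbtpos : 0 < (b:ℝ) * t u q n := by
      have : (0:ℝ) < (b:ℝ) := by exact_mod_cast hb1
      nlinarith
    have habs : |(N:ℝ)| < 1 := by
      rw [hNr]
      have h1 : |2 ^ A u q n * ((b:ℝ) * xi u q - r)| < 2 ^ A u q n * (2 ^ g u q n)⁻¹ := by
        rw [abs_mul, abs_of_pos hApos]
        apply mul_lt_mul_of_pos_left _ hApos
        rw [← hd]; exact hcon
      have h2 : (2:ℝ) ^ A u q n * (2 ^ g u q n)⁻¹ ≤ 1/32 := by
        have := inv_anti₀ (by positivity : (0:ℝ) < 2 ^ A u q n * 32) hg32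
        rw [mul_inv] at this
        have h32 : (2 ^ g u q n : ℝ)⁻¹ ≤ (2 ^ A u q n)⁻¹ * 32⁻¹ := this
        calc (2:ℝ) ^ A u q n * (2 ^ g u q n)⁻¹ ≤ 2 ^ A u q n * ((2 ^ A u q n)⁻¹ * 32⁻¹) :=
              mul_le_mul_of_nonneg_left h32 hApos.le
          _ = 1/32 := by field_simp
      calc |2 ^ A u q n * ((b:ℝ) * xi u q - r) - (b:ℝ) * t u q n|
          ≤ |2 ^ A u q n * ((b:ℝ) * xi u q - r)| + |(b:ℝ) * t u q n| := abs_sub _ _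
        _ < 2 ^ A u q n * (2 ^ g u q n)⁻¹ + (b:ℝ) * t u q n := by
            rw [abs_of_pos hbtpos]; linarith
        _ ≤ 1/32 + 1/4 := by linarith
        _ < 1 := by norm_num
    have hN0 : N = 0 := Int.abs_lt_one_iff.mp (by exact_mod_cast habs)
    have hdvZ : ((2:ℤ)) ^ A u q n ∣ (b:ℤ) * (P u q n : ℤ) := by
      refine ⟨r, ?_⟩
      have : (b:ℤ) * (P u q n : ℤ) - r * 2 ^ A u q n = 0 := hN0
      linarith
    have hdvN : (2:ℕ) ^ A u q n ∣ b * P u q n := by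
      have h := hdvZ
      rw [show ((2:ℤ)) ^ A u q n = ((2 ^ A u q n : ℕ) : ℤ) by push_cast; ring,
        show (b:ℤ) * (P u q n : ℤ) = ((b * P u q n : ℕ) : ℤ) by push_cast; ring] at h
      exact_mod_cast h
    exact hdvd ((Nat.Coprime.pow_left _
      ((Nat.prime_two.coprime_iff_not_dvd).mpr (P_odd u q n))).dvd_of_dvd_mul_right hdvN)

lemma xi_irrational : Irrational (xi u q) := by
  by_contra h
  rw [Irrational, not_not] at h
  obtain ⟨r, hr⟩ := h
  set n := r.den with hn
  have hden : (0:ℝ) < (r.den:ℝ) := by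
    have := r.den_pos
    exact_mod_cast this
  have hnum : (r.den:ℝ) * (xi u q) = (r.num:ℝ) := by
    rw [← hr, Rat.cast_def]
    field_simp
  set z : ℤ := 2 ^ A u q n * r.num - (P u q n : ℤ) * r.den with hz
  have hzr : (z:ℝ) = (r.den:ℝ) * t u q n := by
    push_cast [hz]
    linear_combination (r.den:ℝ) * key_split u q n - (2:ℝ) ^ A u q n * hnum
  have hzpos : 0 < z := by
    have : (0:ℝ) < (z:ℝ) := by rw [hzr]; exact mul_pos hden (t_pos u q n)
    exact_mod_cast this
  have hz1 : (1:ℝ) ≤ (z:ℝ) := by exact_mod_cast hzpos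
  have hsmall : (z:ℝ) < 1 := by
    rw [hzr]
    have h1 := t_le u q n
    have h2 : 2 * r.den < 2 ^ g u q n := by
      have ha : r.den < 2 ^ r.den := Nat.lt_two_pow_self
      have hb : r.den + 1 ≤ g u q n := by
        have := g_ge u q n
        have := A_ge u q n
        omega
      calc 2 * r.den < 2 * 2 ^ r.den := by omega
        _ = 2 ^ (r.den + 1) := by ring
        _ ≤ 2 ^ g u q n := Nat.pow_le_pow_right (by norm_num) hb
    have h2R : (2:ℝ) * (r.den:ℝ) < 2 ^ g u q n := by exact_mod_cast h2
    have hgpos : (0:ℝ) < 2 ^ g u q n := by positivity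
    have h3 : (r.den:ℝ) * t u q n ≤ (r.den:ℝ) * (2 * (2 ^ g u q n)⁻¹) :=
      mul_le_mul_of_nonneg_left h1 hden.le
    have h4 : (r.den:ℝ) * (2 * (2 ^ g u q n)⁻¹) = (2 * r.den) / 2 ^ g u q n := by
      field_simp
    have h5 : ((2:ℝ) * r.den) / 2 ^ g u q n < 1 := by
      rw [div_lt_one hgpos]; exact h2R
    linarith
  linarith


lemma u_mono (hu2 : ∀ n, u n + 1 ≤ u (n + 1)) : Monotone u :=
  monotone_nat_of_le_succ fun n => by linarith [hu2 n]

lemma u_add (hu2 : ∀ n, u n + 1 ≤ u (n + 1)) (n k : ℕ) : u n + k ≤ u (n + k) := by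
  induction k with
  | zero => simp
  | succ k ih =>
    have h1 := hu2 (n + k)
    have h2 : n + (k + 1) = (n + k) + 1 := by omega
    rw [h2]
    push_cast
    push_cast at ih
    linarith

lemma mem_sub (hq : StrictMono q) (hqpos : ∀ n, 0 < q n) (hupos : ∀ n, 0 < u n) :
    xi u q ∈ LSet (q ∘ J u q) u := by
  refine ⟨xi_irrational u q, 1, 1, one_pos, one_pos, fun n => 2 ^ A u q n,
    Filter.Eventually.of_forall fun n => ?_⟩
  have hQ1 : (1:ℝ) ≤ ((q (J u q n)):ℝ) := by exact_mod_cast hqpos _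
  have hQ0 : (0:ℝ) < ((q (J u q n)):ℝ) := by linarith
  set L := Real.logb 2 ((q (J u q n)):ℝ) with hL
  have hL0 : 0 ≤ L := Real.logb_nonneg one_lt_two hQ1
  refine ⟨Nat.one_le_two_pow, ?_, ?_⟩
  · show ((2 ^ A u q n : ℕ):ℝ) ≤ ((q (J u q n)):ℝ) ^ (1:ℝ)
    rw [Real.rpow_one]
    exact_mod_cast le_trans (pow_le_J u q n) hq.le_apply
  · show distNearestInt _ ≤ ((q (J u q n)):ℝ) ^ (-(1 * u n))
    have hcast : ((2 ^ A u q n : ℕ):ℝ) = (2:ℝ) ^ A u q n := by push_cast; ring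
    rw [hcast]
    have hdist : distNearestInt ((2:ℝ) ^ A u q n * xi u q) = t u q n := by
      rw [key_split u q n, dNI_nat_add, dNI_eq_self (t_pos u q n) (t_lt_half u q n)]
    rw [hdist]
    have hQL : ((q (J u q n)):ℝ) = (2:ℝ) ^ L := (Real.rpow_logb two_pos (by norm_num) hQ0).symm
    rw [hQL, ← Real.rpow_mul (by norm_num : (0:ℝ) ≤ 2)]
    have h1 := t_le u q n
    have h2 : 2 * ((2:ℝ) ^ g u q n)⁻¹ = (2:ℝ) ^ ((1:ℝ) - (g u q n : ℕ)) := by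
      rw [Real.rpow_sub two_pos, Real.rpow_one, Real.rpow_natCast, div_eq_mul_inv]
    have hgle : u n * L + 1 ≤ (g u q n : ℝ) := by
      have hc := Nat.le_ceil ((u n + 3) * L)
      have hcg : ((⌈(u n + 3) * L⌉₊ : ℕ) : ℝ) + 5 ≤ (g u q n : ℝ) := by
        exact_mod_cast g_ge' u q n
      nlinarith [hupos n]
    have h3 : (2:ℝ) ^ ((1:ℝ) - (g u q n : ℕ)) ≤ 2 ^ (L * (-(1 * u n))) := by
      apply Real.rpow_le_rpow_of_exponent_le one_le_two
      have : L * (-(1 * u n)) = -(u n * L) := by ring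
      rw [this]
      linarith
    linarith [h2 ▸ h1]

set_option maxHeartbeats 1000000 in
lemma not_mem (hq : StrictMono q) (hqpos : ∀ n, 0 < q n) (hupos : ∀ n, 0 < u n)
    (hu2 : ∀ n, u n + 1 ≤ u (n + 1)) : xi u q ∉ LSet q u := by
  rintro ⟨-, κ₁, κ₂, hκ₁, hκ₂, b, hev⟩
  obtain ⟨M, hM⟩ := eventually_atTop.mp hev
  set n := M + ⌈κ₁⌉₊ + ⌈6/κ₂⌉₊ with hn
  have hnM : M ≤ n := by omega
  have hnκ₁ : κ₁ ≤ (n:ℝ) := by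
    have h1 : (⌈κ₁⌉₊:ℝ) ≤ (n:ℝ) := by exact_mod_cast (by omega : ⌈κ₁⌉₊ ≤ n)
    exact le_trans (Nat.le_ceil κ₁) h1
  have hnκ₂ : 6 ≤ κ₂ * n := by
    have h1 : (⌈6/κ₂⌉₊:ℝ) ≤ (n:ℝ) := by exact_mod_cast (by omega : ⌈6/κ₂⌉₊ ≤ n)
    have h2 : 6/κ₂ ≤ (n:ℝ) := le_trans (Nat.le_ceil _) h1
    have := (div_le_iff₀ hκ₂).mp h2
    linarith
  set m := J u q n with hm
  have hmn : n ≤ m := n_le_J u q n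
  obtain ⟨hb1, hb2, hb3⟩ := hM m (le_trans hnM hmn)
  have hQge : (2:ℕ) ^ A u q n ≤ q m := le_trans (pow_le_J u q n) hq.le_apply
  have hQ1 : (1:ℝ) ≤ ((q m):ℝ) := by exact_mod_cast hqpos m
  have hQ0 : (0:ℝ) < ((q m):ℝ) := by linarith
  set L := Real.logb 2 ((q m):ℝ) with hL
  have hQL : ((q m):ℝ) = (2:ℝ) ^ L := (Real.rpow_logb two_pos (by norm_num) hQ0).symm
  have hAL : ((A u q n : ℕ):ℝ) ≤ L := by
    have h1 : ((2:ℝ)) ^ ((A u q n : ℕ):ℝ) ≤ ((q m):ℝ) := by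
      rw [Real.rpow_natCast]
      exact_mod_cast hQge
    have h2 := Real.logb_le_logb_of_le one_lt_two (by positivity) h1
    rwa [Real.logb_rpow two_pos (by norm_num)] at h2
  have hA3 : (3:ℝ) ≤ ((A u q n : ℕ):ℝ) := by exact_mod_cast (by have := A_ge u q n; omega : 3 ≤ A u q n)
  have hL3 : (3:ℝ) ≤ L := le_trans hA3 hAL
  have hun : κ₁ ≤ u n := by
    have h1 := u_add u hu2 0 n
    rw [Nat.zero_add] at h1
    have := hupos 0
    linarith
  -- Apply the key lower bound
  have hcg : ((⌈(u n + 3) * L⌉₊ : ℕ) : ℝ) + 5 ≤ (g u q n : ℝ) := by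
    exact_mod_cast g_ge' u q n
  have hc := Nat.le_ceil ((u n + 3) * L)
  have hb8 : (b m : ℝ) * 8 ≤ 2 ^ g u q n := by
    have h1 : ((q m):ℝ) ^ κ₁ = 2 ^ (L * κ₁) := by
      rw [hQL, ← Real.rpow_mul (by norm_num : (0:ℝ) ≤ 2)]
    have h23 : (2:ℝ) ^ ((3:ℕ):ℝ) = 8 := by rw [Real.rpow_natCast]; norm_num
    have h2 : (2:ℝ) ^ (L * κ₁) * 8 = 2 ^ (L * κ₁ + 3) := by
      rw [Real.rpow_add two_pos]
      rw [show (3:ℝ) = ((3:ℕ):ℝ) by norm_num, h23]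
    have h3 : L * κ₁ + 3 ≤ (g u q n : ℝ) := by nlinarith [hupos n]
    have h4 : (2:ℝ) ^ (L * κ₁ + 3) ≤ 2 ^ ((g u q n : ℕ):ℝ) :=
      Real.rpow_le_rpow_of_exponent_le one_le_two h3
    rw [Real.rpow_natCast] at h4
    have h5 : (b m : ℝ) ≤ 2 ^ (L * κ₁) := by rw [← h1]; exact hb2
    nlinarith [Real.rpow_nonneg (by norm_num : (0:ℝ) ≤ 2) (L * κ₁)]
  have hkey := keyLower u q n (b m) hb1 hb8
  have hchain : ((2:ℝ) ^ g u q n)⁻¹ ≤ ((q m):ℝ) ^ (-(κ₂ * u m)) := le_trans hkey hb3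
  have h5 : (2:ℝ) ^ (-((g u q n : ℕ):ℝ)) ≤ 2 ^ (L * (-(κ₂ * u m))) := by
    rw [hQL, ← Real.rpow_mul (by norm_num : (0:ℝ) ≤ 2)] at hchain
    rw [Real.rpow_neg (by norm_num : (0:ℝ) ≤ 2), Real.rpow_natCast]
    exact hchain
  have h6 : -((g u q n : ℕ):ℝ) ≤ L * (-(κ₂ * u m)) := (Real.rpow_le_rpow_left_iff one_lt_two).mp h5
  have h7 : (g u q n : ℝ) ≤ (u n + 5) * L := by
    have hgdef : g u q n = max (A u q n + 5) (⌈(u n + 3) * L⌉₊ + 5) := rfl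
    have hceil : ((⌈(u n + 3) * L⌉₊:ℕ):ℝ) < (u n + 3) * L + 1 :=
      Nat.ceil_lt_add_one (by nlinarith [hupos n])
    rw [hgdef]
    push_cast [Nat.cast_max]
    apply max_le
    · nlinarith [hupos n]
    · nlinarith [hupos n]
  have hLpos : (0:ℝ) < L := by linarith
  have h8' : κ₂ * u m * L ≤ (u n + 5) * L := by nlinarith [h6, h7]
  have h8 : κ₂ * u m ≤ u n + 5 := (mul_le_mul_iff_left₀ hLpos).mp h8'
  have h9 : u n + ((⌈(n:ℝ) * (u n + 2)⌉₊:ℕ):ℝ) ≤ u m := by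
    have hJ := ceil_le_J u q n
    have h1 := u_add u hu2 n ⌈(n:ℝ) * (u n + 2)⌉₊
    have h2 := u_mono u hu2 hJ
    linarith
  have h10 : (n:ℝ) * (u n + 2) ≤ ((⌈(n:ℝ) * (u n + 2)⌉₊:ℕ):ℝ) := Nat.le_ceil _
  have hB : u n + (n:ℝ) * (u n + 2) ≤ u m := by linarith
  have hC : κ₂ * (u n + (n:ℝ) * (u n + 2)) ≤ κ₂ * u m := mul_le_mul_of_nonneg_left hB hκ₂.le
  have hD : 6 * (u n + 2) ≤ (κ₂ * n) * (u n + 2) :=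
    mul_le_mul_of_nonneg_right hnκ₂ (by linarith [hupos n])
  nlinarith [mul_pos hκ₂ (hupos n)]

end LiouvilleAux

/-- Every increasing sequence q has a subsequence q' with S_{q,u} ⊊ S_{q',u}. -/
theorem exists_subseq_LSet_ssubset (u : ℕ → ℝ) (hupos : ∀ n, 0 < u n)
    (hu : ∀ n, Real.sqrt (u (n + 1)) ≤ u n + 1 ∧ u n + 1 ≤ u (n + 1))
    (q : ℕ → ℕ) (hq : StrictMono q) (hqpos : ∀ n, 0 < q n) :
    ∃ i : ℕ → ℕ, StrictMono i ∧ LSet q u ⊂ LSet (q ∘ i) u := by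
  have hu2 : ∀ n, u n + 1 ≤ u (n + 1) := fun n => (hu n).2
  refine ⟨LiouvilleAux.J u q, LiouvilleAux.J_mono u q, ?_⟩
  rw [Set.ssubset_def]
  constructor
  · -- inclusion
    rintro ξ ⟨hirr, κ₁, κ₂, hκ₁, hκ₂, b, hev⟩
    refine ⟨hirr, κ₁, κ₂, hκ₁, hκ₂, fun n => b (LiouvilleAux.J u q n), ?_⟩
    obtain ⟨M, hM⟩ := Filter.eventually_atTop.mp hev
    refine Filter.eventually_atTop.mpr ⟨M, fun n hn => ?_⟩
    obtain ⟨c1, c2, c3⟩ := hM (LiouvilleAux.J u q n) (le_trans hn (LiouvilleAux.n_le_J u q n))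
    refine ⟨c1, c2, le_trans c3 ?_⟩
    have hun : u n ≤ u (LiouvilleAux.J u q n) :=
      LiouvilleAux.u_mono u hu2 (LiouvilleAux.n_le_J u q n)
    apply Real.rpow_le_rpow_of_exponent_le
    · exact_mod_cast hqpos _
    · have : κ₂ * u n ≤ κ₂ * u (LiouvilleAux.J u q n) := mul_le_mul_of_nonneg_left hun hκ₂.le
      linarith
  · -- not superset
    intro hsup
    exact LiouvilleAux.not_mem u q hq hqpos hupos hu2
      (hsup (LiouvilleAux.mem_sub u q hq hqpos hupos))
end

section
/- The set S_{q,u} is not a dense G_δ subset of ℝ; in fact there is a real number t such that S_{q,u} and t + S_{q,u} are disjoint, hence S_{q,u} is not comeager. -/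
open Filter

set_option maxHeartbeats 1000000

lemma distNearestInt_le (x : ℝ) (k : ℤ) : distNearestInt x ≤ |x - k| := by
  unfold distNearestInt
  by_contra h
  push_neg at h
  have h2 : |x - round x| ≤ 1/2 := abs_sub_round x
  have h3 : |((round x : ℤ) : ℝ) - k| < 1 := by
    calc |((round x : ℤ) : ℝ) - k| ≤ |((round x:ℤ):ℝ) - x| + |x - k| := abs_sub_le _ _ _
    _ < 1 := by rw [abs_sub_comm]; linarith
  have h4 : ((|round x - k| : ℤ) : ℝ) < 1 := by push_cast; exact h3
  have h5 : |round x - k| < 1 := by exact_mod_cast h4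
  have h6 : round x = k := by rw [abs_lt] at h5; omega
  rw [h6] at h; linarith

/-- The numerical core: from good rational approximations to `ξ` and `ξ - t` with a common
scale `Q`, produce a Liouville-type approximation to `t`. -/
lemma core {Q ξ t : ℝ} {e₁ e₂ f₁ f₂ : ℝ} (m : ℕ) (b c : ℕ)
    (hQ : 2 ≤ Q) (hb1 : 1 ≤ b) (hc1 : 1 ≤ c)
    (hβ : (b : ℝ) ≤ Q ^ e₁) (hγ : (c : ℝ) ≤ Q ^ e₂)
    (hbd : |(b : ℝ) * ξ - round ((b : ℝ) * ξ)| ≤ Q ^ (-f₁))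
    (hcd : |(c : ℝ) * (ξ - t) - round ((c : ℝ) * (ξ - t))| ≤ Q ^ (-f₂))
    (h₁ : e₂ + (e₁ + e₂ + 1) * m + 2 ≤ f₁)
    (h₂ : e₁ + (e₁ + e₂ + 1) * m + 2 ≤ f₂)
    (ht : Irrational t) :
    ∃ a B : ℤ, 1 < B ∧ t ≠ a / B ∧ |t - a / B| < 1 / (B : ℝ) ^ m := by
  have hQ0 : (0:ℝ) < Q := by linarith
  have hQ1 : (1:ℝ) < Q := by linarith
  have hrpos : ∀ x : ℝ, (0:ℝ) < Q ^ x := fun x => Real.rpow_pos_of_pos hQ0 x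
  have hβ1 : (1:ℝ) ≤ (b:ℝ) := by exact_mod_cast hb1
  have hγ1 : (1:ℝ) ≤ (c:ℝ) := by exact_mod_cast hc1
  have hβ0 : (0:ℝ) < (b:ℝ) := by linarith
  have hγ0 : (0:ℝ) < (c:ℝ) := by linarith
  obtain ⟨D, hDdef⟩ : ∃ D : ℝ, D = 2 * (b:ℝ) * (c:ℝ) := ⟨_, rfl⟩
  have hD2 : (2:ℝ) ≤ D := by rw [hDdef]; nlinarith
  have hD0 : (0:ℝ) < D := by linarith
  obtain ⟨k, hkdef⟩ : ∃ k : ℝ,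
      k = 2 * (c:ℝ) * ↑(round ((b:ℝ) * ξ)) - 2 * (b:ℝ) * ↑(round ((c:ℝ) * (ξ - t))) := ⟨_, rfl⟩
  have heq : D * t - k
      = 2 * (c:ℝ) * ((b:ℝ) * ξ - round ((b:ℝ) * ξ))
        - 2 * (b:ℝ) * ((c:ℝ) * (ξ - t) - round ((c:ℝ) * (ξ - t))) := by
    rw [hDdef, hkdef]; ring
  have h1 : |D * t - k| ≤ 2 * (c:ℝ) * Q ^ (-f₁) + 2 * (b:ℝ) * Q ^ (-f₂) := by
    rw [heq]
    calc |2 * (c:ℝ) * ((b:ℝ) * ξ - round ((b:ℝ) * ξ))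
          - 2 * (b:ℝ) * ((c:ℝ) * (ξ - t) - round ((c:ℝ) * (ξ - t)))|
        ≤ |2 * (c:ℝ) * ((b:ℝ) * ξ - round ((b:ℝ) * ξ))|
          + |2 * (b:ℝ) * ((c:ℝ) * (ξ - t) - round ((c:ℝ) * (ξ - t)))| := abs_sub _ _
      _ = 2 * (c:ℝ) * |(b:ℝ) * ξ - round ((b:ℝ) * ξ)|
          + 2 * (b:ℝ) * |(c:ℝ) * (ξ - t) - round ((c:ℝ) * (ξ - t))| := by
          rw [abs_mul (2 * (c:ℝ)), abs_mul (2 * (b:ℝ)),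
            abs_of_nonneg (by positivity : (0:ℝ) ≤ 2 * (c:ℝ)),
            abs_of_nonneg (by positivity : (0:ℝ) ≤ 2 * (b:ℝ))]
      _ ≤ 2 * (c:ℝ) * Q ^ (-f₁) + 2 * (b:ℝ) * Q ^ (-f₂) := by gcongr
  have hterm1 : 2 * (c:ℝ) * Q ^ (-f₁) ≤ Q ^ (-((e₁ + e₂ + 1) * (m:ℝ)) - 1) := by
    have h2 : 2 * (c:ℝ) ≤ Q ^ (e₂ + 1) := by
      have he : Q ^ (e₂ + 1) = Q ^ e₂ * Q := by rw [Real.rpow_add hQ0, Real.rpow_one]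
      nlinarith [hrpos e₂]
    calc 2 * (c:ℝ) * Q ^ (-f₁) ≤ Q ^ (e₂ + 1) * Q ^ (-f₁) := by
          have := (hrpos (-f₁)).le
          nlinarith
      _ = Q ^ (e₂ + 1 + -f₁) := (Real.rpow_add hQ0 _ _).symm
      _ ≤ Q ^ (-((e₁ + e₂ + 1) * (m:ℝ)) - 1) :=
          Real.rpow_le_rpow_of_exponent_le hQ1.le (by linarith [h₁])
  have hterm2 : 2 * (b:ℝ) * Q ^ (-f₂) ≤ Q ^ (-((e₁ + e₂ + 1) * (m:ℝ)) - 1) := by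
    have h2 : 2 * (b:ℝ) ≤ Q ^ (e₁ + 1) := by
      have he : Q ^ (e₁ + 1) = Q ^ e₁ * Q := by rw [Real.rpow_add hQ0, Real.rpow_one]
      nlinarith [hrpos e₁]
    calc 2 * (b:ℝ) * Q ^ (-f₂) ≤ Q ^ (e₁ + 1) * Q ^ (-f₂) := by
          have := (hrpos (-f₂)).le
          nlinarith
      _ = Q ^ (e₁ + 1 + -f₂) := (Real.rpow_add hQ0 _ _).symm
      _ ≤ Q ^ (-((e₁ + e₂ + 1) * (m:ℝ)) - 1) :=
          Real.rpow_le_rpow_of_exponent_le hQ1.le (by linarith [h₂])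
  have hsum : |D * t - k| ≤ Q ^ (-((e₁ + e₂ + 1) * (m:ℝ))) := by
    have he : Q ^ (-((e₁ + e₂ + 1) * (m:ℝ)) - 1) = Q ^ (-((e₁ + e₂ + 1) * (m:ℝ))) / Q := by
      rw [Real.rpow_sub hQ0, Real.rpow_one]
    have h3 : (2:ℝ) * Q ^ (-((e₁ + e₂ + 1) * (m:ℝ)) - 1) ≤ Q ^ (-((e₁ + e₂ + 1) * (m:ℝ))) := by
      rw [he, div_eq_mul_inv]
      have hi : Q⁻¹ ≤ 2⁻¹ := by
        rw [inv_le_inv₀ hQ0 (by norm_num)]; exact hQ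
      nlinarith [(hrpos (-((e₁ + e₂ + 1) * (m:ℝ)))).le, hrpos (-((e₁ + e₂ + 1) * (m:ℝ)))]
    linarith
  have hDQ : D ≤ Q ^ (e₁ + e₂ + 1) := by
    have h4 : Q ^ (e₁ + e₂ + 1) = Q ^ e₁ * Q ^ e₂ * Q := by
      rw [Real.rpow_add hQ0, Real.rpow_add hQ0, Real.rpow_one]
    have h5 : (b:ℝ) * (c:ℝ) ≤ Q ^ e₁ * Q ^ e₂ := mul_le_mul hβ hγ hγ0.le (hrpos e₁).le
    have h6 : (0:ℝ) ≤ Q ^ e₁ * Q ^ e₂ * (Q - 2) :=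
      mul_nonneg (mul_pos (hrpos e₁) (hrpos e₂)).le (by linarith)
    rw [h4, hDdef]
    nlinarith [h5, h6]
  have hQm : Q ^ (-((e₁ + e₂ + 1) * (m:ℝ))) ≤ (D ^ m)⁻¹ := by
    rw [Real.rpow_neg hQ0.le]
    have h5 : D ^ m ≤ Q ^ ((e₁ + e₂ + 1) * (m:ℝ)) := by
      have he : Q ^ ((e₁ + e₂ + 1) * (m:ℝ)) = (Q ^ (e₁ + e₂ + 1)) ^ m := by
        rw [← Real.rpow_natCast (Q ^ (e₁ + e₂ + 1)) m, ← Real.rpow_mul hQ0.le]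
      rw [he]
      exact pow_le_pow_left₀ hD0.le hDQ m
    exact inv_anti₀ (by positivity) h5
  obtain ⟨Dn, hDn⟩ : ∃ Dn : ℤ, (Dn : ℝ) = D := ⟨2 * (b:ℤ) * (c:ℤ), by rw [hDdef]; push_cast; ring⟩
  refine ⟨round (D * t), Dn, ?_, ?_, ?_⟩
  · have : (1:ℝ) < (Dn : ℝ) := by rw [hDn]; linarith
    exact_mod_cast this
  · intro hteq
    apply ht
    refine ⟨(round (D * t) : ℚ) / (Dn : ℚ), ?_⟩
    push_cast
    exact hteq.symm
  · have hdist : |D * t - round (D * t)| ≤ Q ^ (-((e₁ + e₂ + 1) * (m:ℝ))) := by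
      obtain ⟨kz, hkz⟩ : ∃ kz : ℤ, (kz : ℝ) = k :=
        ⟨2 * (c:ℤ) * round ((b:ℝ) * ξ) - 2 * (b:ℤ) * round ((c:ℝ) * (ξ - t)),
          by rw [hkdef]; push_cast; ring⟩
      have hd := distNearestInt_le (D * t) kz
      unfold distNearestInt at hd
      rw [hkz] at hd
      exact hd.trans hsum
    rw [hDn]
    have heq2 : t - (round (D * t) : ℝ) / D = (D * t - round (D * t)) / D := by
      field_simp
    rw [heq2, abs_div, abs_of_pos hD0]
    have h6 : |D * t - (round (D * t) : ℝ)| / D ≤ (D ^ m)⁻¹ / D := by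
      gcongr
      exact hdist.trans hQm
    have h7 : (D ^ m)⁻¹ / D < (D ^ m)⁻¹ := div_lt_self (by positivity) (by linarith)
    rw [one_div]
    linarith

lemma not_liouville_sqrt_two : ¬ Liouville (Real.sqrt 2) := by
  intro h
  apply h.transcendental
  refine ⟨Polynomial.X ^ 2 - Polynomial.C 2, Polynomial.X_pow_sub_C_ne_zero (by norm_num) 2, ?_⟩
  have h2 : (Real.sqrt 2) ^ 2 = 2 := Real.sq_sqrt (by norm_num)
  simp [h2, map_ofNat]

lemma liouville_of_both (q : ℕ → ℕ) (u : ℕ → ℝ) (hq : StrictMono q)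
    (hu : Filter.Tendsto u Filter.atTop Filter.atTop) {ξ t : ℝ} (ht : Irrational t)
    (hξ : ξ ∈ LSet q u) (hη : ξ - t ∈ LSet q u) : Liouville t := by
  obtain ⟨-, κ₁, κ₂, hκ₁, hκ₂, b, hb⟩ := hξ
  obtain ⟨-, κ₃, κ₄, hκ₃, hκ₄, c, hc⟩ := hη
  intro m
  have E3 : ∀ᶠ n in atTop, 2 ≤ q n :=
    eventually_atTop.2 ⟨2, fun n hn => hn.trans hq.le_apply⟩
  have E4 : ∀ᶠ n in atTop, κ₃ + (κ₁ + κ₃ + 1) * m + 2 ≤ κ₂ * u n := by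
    filter_upwards [hu.eventually_ge_atTop ((κ₃ + (κ₁ + κ₃ + 1) * m + 2) / κ₂)] with n hn
    rw [div_le_iff₀ hκ₂] at hn
    linarith
  have E5 : ∀ᶠ n in atTop, κ₁ + (κ₁ + κ₃ + 1) * m + 2 ≤ κ₄ * u n := by
    filter_upwards [hu.eventually_ge_atTop ((κ₁ + (κ₁ + κ₃ + 1) * m + 2) / κ₄)] with n hn
    rw [div_le_iff₀ hκ₄] at hn
    linarith
  obtain ⟨n, ⟨hb1, hbQ, hbd⟩, ⟨hc1, hcQ, hcd⟩, hQ2', hE4, hE5⟩ :=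
    (hb.and (hc.and (E3.and (E4.and E5)))).exists
  exact core m (b n) (c n) (by exact_mod_cast hQ2' : (2:ℝ) ≤ (q n : ℝ)) hb1 hc1 hbQ hcQ
    hbd hcd hE4 hE5 ht

/-- S_{q,u} is not a dense G_δ: there is t with S_{q,u} ∩ (t + S_{q,u}) = ∅,
and S_{q,u} is not comeager. -/
theorem LSet_not_dense_Gdelta (q : ℕ → ℕ) (u : ℕ → ℝ)
    (hq : StrictMono q) (hqpos : ∀ n, 0 < q n)
    (hupos : ∀ n, 0 < u n) (hu : Filter.Tendsto u Filter.atTop Filter.atTop) :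
    (∃ t : ℝ, LSet q u ∩ ((fun x => t + x) '' LSet q u) = ∅) ∧
    ¬ (IsGδ (LSet q u) ∧ Dense (LSet q u)) ∧
    LSet q u ∉ residual ℝ := by
  have hdisj : LSet q u ∩ ((fun x => Real.sqrt 2 + x) '' LSet q u) = ∅ := by
    rw [Set.eq_empty_iff_forall_notMem]
    rintro ξ ⟨hξ, x, hx, hxt⟩
    have hsub : ξ - Real.sqrt 2 ∈ LSet q u := by
      have : ξ - Real.sqrt 2 = x := by rw [← hxt]; ring
      rwa [this]
    exact not_liouville_sqrt_two
      (liouville_of_both q u hq hu irrational_sqrt_two hξ hsub)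
  have hres : LSet q u ∉ residual ℝ := by
    intro h
    have h2 : (fun x => Real.sqrt 2 + x) '' LSet q u ∈ residual ℝ := by
      have hmap := Homeomorph.residual_map_eq (Homeomorph.addLeft (Real.sqrt 2))
      rw [← hmap]
      have := Filter.image_mem_map (f := residual ℝ) (m := Homeomorph.addLeft (Real.sqrt 2)) h
      simpa using this
    have h3 := Filter.inter_mem h h2
    have h4 := (dense_of_mem_residual h3).nonempty
    rw [hdisj] at h4
    exact Set.not_nonempty_empty h4
  exact ⟨⟨Real.sqrt 2, hdisj⟩,
    fun ⟨hG, hd⟩ => hres (residual_of_dense_Gδ hG hd), hres⟩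
end
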